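/- arXiv:2602.21478 — 2 statements merged into one kernel-verified Lean document; each statement's English description precedes it below -/
import Mathlib

section
/- Let v_1,…,v_d be an orthonormal basis of ℝ^d, e a unit vector, and σ_2,…,σ_d real numbers. Then ‖ (Σ_{i=2}^d σ_i v_i v_i⊤) e e⊤ ‖_op ≤ (max_{j≥2} |σ_j|) · ‖v_1 − e‖. -/
open Matrix Finset
open scoped RealInnerProductSpace

lemma vecMulVec_mulVec' {n : Type*} [Fintype n] (a c : n → ℝ) (v : n → ℝ) :
    vecMulVec a c *ᵥ v = (c ⬝ᵥ v) • a := by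
  funext j
  simp [Matrix.mulVec, Matrix.vecMulVec_apply, dotProduct, Finset.mul_sum, mul_comm, mul_assoc,
    mul_left_comm]

/-- Rotation bound: for an orthonormal basis `(b i)` of `ℝ^d`, a unit vector
`e`, and coefficients `σ_i` with `|σ_i| ≤ C` for `i ≠ 0`, the operator norm of
`(Σ_{i≠0} σ_i b_i b_i⊤) e e⊤` is at most `C · ‖b 0 − e‖`. -/
theorem rotation_bound {d : ℕ} (hd : 1 ≤ d)
    (b : OrthonormalBasis (Fin d) ℝ (EuclideanSpace ℝ (Fin d)))
    (e : EuclideanSpace ℝ (Fin d)) (he : ‖e‖ = 1)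
    (σ : Fin d → ℝ) (C : ℝ) (hC : 0 ≤ C)
    (hσ : ∀ i, i ≠ (⟨0, hd⟩ : Fin d) → |σ i| ≤ C) :
    ‖Matrix.toEuclideanCLM (𝕜 := ℝ) (n := Fin d)
        ((∑ i ∈ univ.filter (· ≠ (⟨0, hd⟩ : Fin d)),
            σ i • vecMulVec (b i : Fin d → ℝ) (b i : Fin d → ℝ)) *
          vecMulVec (e : Fin d → ℝ) (e : Fin d → ℝ))‖
      ≤ C * ‖b ⟨0, hd⟩ - e‖ := by
  classical
  set i0 : Fin d := ⟨0, hd⟩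
  set s : Finset (Fin d) := univ.filter (· ≠ i0) with hs
  set A : Matrix (Fin d) (Fin d) ℝ :=
    ∑ i ∈ s, σ i • vecMulVec (b i : Fin d → ℝ) (b i : Fin d → ℝ) with hA
  set w : EuclideanSpace ℝ (Fin d) := ∑ i ∈ s, (σ i * ⟪b i, e⟫) • b i with hw
  -- key: the operator acts as x ↦ ⟪e, x⟫ • w
  have key : ∀ x : EuclideanSpace ℝ (Fin d),
      Matrix.toEuclideanCLM (𝕜 := ℝ) (n := Fin d)
        (A * vecMulVec (e : Fin d → ℝ) (e : Fin d → ℝ)) x = ⟪e, x⟫ • w := by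
    intro x
    apply (WithLp.linearEquiv 2 ℝ (Fin d → ℝ)).injective
    have h : WithLp.equiv 2 (Fin d → ℝ) (Matrix.toEuclideanCLM (𝕜 := ℝ) (n := Fin d)
        (A * vecMulVec (e : Fin d → ℝ) (e : Fin d → ℝ)) x) =
        Matrix.toLin' (A * vecMulVec (e : Fin d → ℝ) (e : Fin d → ℝ)) (WithLp.equiv 2 (Fin d → ℝ) x) :=
      Matrix.ofLp_toEuclideanCLM (𝕜 := ℝ)
      (A * vecMulVec (e : Fin d → ℝ) (e : Fin d → ℝ)) x
    rw [Matrix.toLin'_apply] at h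
    have hL : ∀ y : EuclideanSpace ℝ (Fin d),
        WithLp.linearEquiv 2 ℝ (Fin d → ℝ) y = WithLp.equiv 2 (Fin d → ℝ) y := fun _ => rfl
    rw [hL, h, _root_.map_smul, hw, map_sum]
    funext j
    simp only [hL, _root_.map_smul]
    have hbequiv : ∀ i, WithLp.equiv 2 (Fin d → ℝ) (b i) = (b i : Fin d → ℝ) := fun _ => rfl
    have hxequiv : WithLp.equiv 2 (Fin d → ℝ) x = (x : Fin d → ℝ) := rfl
    have hinner : ∀ u v : EuclideanSpace ℝ (Fin d), ⟪u, v⟫ = ∑ k, u k * v k := by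
      intro u v; simp [PiLp.inner_apply, mul_comm]
    have hsm : ∀ (c : ℝ) (y : EuclideanSpace ℝ (Fin d)),
        WithLp.equiv 2 (Fin d → ℝ) (c • y) = c • WithLp.equiv 2 (Fin d → ℝ) y := fun _ _ => rfl
    simp only [hsm, hbequiv, hxequiv, Pi.smul_apply, Finset.sum_apply,
      smul_eq_mul, Matrix.mulVec, dotProduct, Matrix.mul_apply, hA, Matrix.sum_apply,
      Matrix.smul_apply, Matrix.vecMulVec_apply, hinner, Finset.sum_mul, Finset.mul_sum]
    conv_lhs =>
      rw [Finset.sum_comm]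
      enter [2, x2]
      rw [Finset.sum_comm]
    conv_lhs => rw [Finset.sum_comm]
    refine Finset.sum_congr rfl fun i _ => Finset.sum_congr rfl fun l _ =>
      Finset.sum_congr rfl fun k _ => by ring
  -- bound ‖w‖
  have hw2 : ‖w‖ ^ 2 = ∑ i ∈ s, (σ i * ⟪b i, e⟫) ^ 2 := by
    have h0 := b.orthonormal.inner_sum (fun i => σ i * ⟪b i, e⟫) (fun i => σ i * ⟪b i, e⟫) s
    rw [← real_inner_self_eq_norm_sq, hw, h0]
    simp [sq]
  have hsum_le : ∑ i ∈ s, (σ i * ⟪b i, e⟫) ^ 2 ≤ C ^ 2 * ∑ i ∈ s, ⟪b i, e⟫ ^ 2 := by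
    rw [Finset.mul_sum]
    apply Finset.sum_le_sum
    intro i hi
    have hi' : i ≠ i0 := by simpa [hs] using hi
    have h1 := hσ i hi'
    have : (σ i * ⟪b i, e⟫) ^ 2 = σ i ^ 2 * ⟪b i, e⟫ ^ 2 := by ring
    rw [this]
    apply mul_le_mul_of_nonneg_right _ (sq_nonneg _)
    calc σ i ^ 2 = |σ i| ^ 2 := (sq_abs _).symm
      _ ≤ C ^ 2 := by exact pow_le_pow_left₀ (abs_nonneg _) h1 2
  have hsum_inner : ∑ i ∈ s, ⟪b i, e⟫ ^ 2 = 1 - ⟪b i0, e⟫ ^ 2 := by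
    have htot : ∑ i : Fin d, ⟪b i, e⟫ ^ 2 = 1 := by
      have h1 : ∀ i : Fin d, ⟪b i, e⟫ = b.repr e i := fun i => (b.repr_apply_apply e i).symm
      have h2 : ‖b.repr e‖ ^ 2 = ∑ i : Fin d, (b.repr e i) ^ 2 := by
        rw [EuclideanSpace.norm_eq]
        rw [Real.sq_sqrt (by positivity)]
        simp [sq_abs]
      have h3 : ‖b.repr e‖ = 1 := by rw [b.repr.norm_map e] ; exact he
      simp only [h1]
      rw [← h2, h3, one_pow]
    have : (∑ i ∈ s, ⟪b i, e⟫ ^ 2) + ⟪b i0, e⟫ ^ 2 = 1 := by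
      rw [← htot]
      rw [hs]
      rw [Finset.filter_ne']
      rw [Finset.sum_erase_add _ _ (Finset.mem_univ i0)]
    linarith
  have hne : ‖b i0 - e‖ ^ 2 = 2 - 2 * ⟪b i0, e⟫ := by
    rw [@norm_sub_sq_real]
    have : ‖(b i0 : EuclideanSpace ℝ (Fin d))‖ = 1 := b.orthonormal.1 i0
    rw [this, he]
    ring
  have hwle : ‖w‖ ≤ C * ‖b i0 - e‖ := by
    have h1 : ‖w‖ ^ 2 ≤ (C * ‖b i0 - e‖) ^ 2 := by
      rw [hw2]
      calc ∑ i ∈ s, (σ i * ⟪b i, e⟫) ^ 2 ≤ C ^ 2 * (1 - ⟪b i0, e⟫ ^ 2) := by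
            rw [← hsum_inner]; exact hsum_le
        _ ≤ C ^ 2 * (2 - 2 * ⟪b i0, e⟫) := by
            apply mul_le_mul_of_nonneg_left _ (sq_nonneg C)
            nlinarith [sq_nonneg (1 - ⟪b i0, e⟫)]
        _ = (C * ‖b i0 - e‖) ^ 2 := by rw [mul_pow, hne]
    nlinarith [norm_nonneg w, mul_nonneg hC (norm_nonneg (b i0 - e))]
  apply ContinuousLinearMap.opNorm_le_bound _ (mul_nonneg hC (norm_nonneg _))
  intro x
  rw [key x, norm_smul]
  have h2 : ‖⟪e, x⟫‖ ≤ ‖x‖ := by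
    calc ‖⟪e, x⟫‖ = |⟪e, x⟫| := rfl
      _ ≤ ‖e‖ * ‖x‖ := abs_real_inner_le_norm e x
      _ = ‖x‖ := by rw [he, one_mul]
  calc ‖⟪e, x⟫‖ * ‖w‖ ≤ ‖x‖ * (C * ‖b i0 - e‖) :=
        mul_le_mul h2 hwle (norm_nonneg w) (norm_nonneg x)
    _ = C * ‖b i0 - e‖ * ‖x‖ := by ring
end

section
/- Let Σ̃ be a d×d positive definite symmetric matrix, Σ̂ a d×d symmetric positive semidefinite matrix, ν ∈ ℝ^d nonzero, λ > 0 with λ ≤ λ_min(Σ̃). If ‖Σ̃^{-1} Σ̂ − I‖_op ≤ ε and λ ‖Σ̃^{-1}‖_op ≤ ε with ε < 1/2, then the functions α̂(z) := ν⊤(Σ̂ + λI)^{-1}φ(z) and α̃(z) := ν⊤ Σ̃^{-1} φ(z) satisfy, for the empirical measure P_T with second-moment matrix Σ̂, ‖α̂ − α̃‖²_{L²(P_T)} = ν⊤((Σ̂+λI)^{-1} − Σ̃^{-1}) Σ̂ ((Σ̂+λI)^{-1} − Σ̃^{-1}) ν ≤ C ε² ν⊤ Σ̃^{-1} ν for an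 absolute constant C. -/
open Matrix Finset

namespace StabAux
variable {d : ℕ}

noncomputable def ev (x : Fin d → ℝ) : EuclideanSpace ℝ (Fin d) := (WithLp.equiv 2 _).symm x

lemma ev_inner (x y : Fin d → ℝ) : (inner ℝ (ev x) (ev y) : ℝ) = x ⬝ᵥ y := by
  simp [ev, PiLp.inner_apply, dotProduct, RCLike.inner_apply, mul_comm]

lemma ev_inner' (y : EuclideanSpace ℝ (Fin d)) (x : Fin d → ℝ) :
    (inner ℝ y (ev x) : ℝ) = (WithLp.equiv 2 _ y) ⬝ᵥ x := by
  simp [ev, PiLp.inner_apply, dotProduct, RCLike.inner_apply, mul_comm]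

lemma quad_abs_le_of_eig (K : Matrix (Fin d) (Fin d) ℝ) (hK : K.IsHermitian) (c : ℝ)
    (heig : ∀ (μ : ℝ) (v : Fin d → ℝ), v ≠ 0 → K *ᵥ v = μ • v → |μ| ≤ c)
    (x : Fin d → ℝ) : |x ⬝ᵥ K *ᵥ x| ≤ c * (x ⬝ᵥ x) := by
  classical
  set b := hK.eigenvectorBasis with hb
  set μ := hK.eigenvalues with hμ
  have hsym : Kᵀ = K := by
    rw [← Matrix.conjTranspose_eq_transpose_of_trivial]; exact hK
  have hev : ∀ y : EuclideanSpace ℝ (Fin d), ev (WithLp.equiv 2 _ y) = y := fun y => rfl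
  have hμc : ∀ i, |μ i| ≤ c := by
    intro i
    refine heig (μ i) (WithLp.equiv 2 _ (b i)) (fun h0 => ?_) (hK.mulVec_eigenvectorBasis i)
    exact hK.eigenvectorBasis.orthonormal.ne_zero i
      (by simpa using congrArg (WithLp.equiv 2 (Fin d → ℝ)).symm h0)
  have h2 : ∀ i, (inner ℝ (b i) (ev (K *ᵥ x)) : ℝ) = μ i * (inner ℝ (b i) (ev x) : ℝ) := by
    intro i
    have e1 : (inner ℝ (b i) (ev (K *ᵥ x)) : ℝ) = (WithLp.equiv 2 _ (b i)) ⬝ᵥ (K *ᵥ x) :=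
      ev_inner' _ _
    have e2 : (WithLp.equiv 2 _ (b i)) ⬝ᵥ (K *ᵥ x)
        = (K *ᵥ (WithLp.equiv 2 _ (b i))) ⬝ᵥ x := by
      rw [dotProduct_mulVec, ← mulVec_transpose, hsym]
    rw [e1, e2, (by exact hK.mulVec_eigenvectorBasis i : K *ᵥ (WithLp.equiv 2 _ (b i)) = μ i • WithLp.equiv 2 _ (b i)), smul_dotProduct, smul_eq_mul, ← ev_inner' (b i)]
  have key : x ⬝ᵥ K *ᵥ x = ∑ i, μ i * (inner ℝ (b i) (ev x) : ℝ)^2 := by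
    rw [← ev_inner, ← b.sum_inner_mul_inner (ev x) (ev (K *ᵥ x))]
    refine Finset.sum_congr rfl fun i _ => ?_
    rw [h2 i, real_inner_comm (ev x) (b i)]; ring
  have key2 : x ⬝ᵥ x = ∑ i, (inner ℝ (b i) (ev x) : ℝ)^2 := by
    rw [← ev_inner, ← b.sum_inner_mul_inner (ev x) (ev x)]
    refine Finset.sum_congr rfl fun i _ => ?_
    rw [real_inner_comm (ev x) (b i)]; ring
  rw [key, key2, Finset.mul_sum]
  refine (Finset.abs_sum_le_sum_abs _ _).trans (Finset.sum_le_sum fun i _ => ?_)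
  rw [abs_mul, abs_of_nonneg (sq_nonneg ((inner ℝ (b i) (ev x)) : ℝ))]
  exact mul_le_mul_of_nonneg_right (hμc i) (sq_nonneg _)
end StabAux

namespace StabAux
variable {d : ℕ}

lemma ev_smul (a : ℝ) (x : Fin d → ℝ) : ev (a • x) = a • ev x := rfl

lemma ev_eq_zero {x : Fin d → ℝ} (h : ev x = 0) : x = 0 := by
  simpa [ev] using congrArg (WithLp.equiv 2 (Fin d → ℝ)) h

lemma clm_apply (M : Matrix (Fin d) (Fin d) ℝ) (x : Fin d → ℝ) :
    Matrix.toEuclideanCLM (𝕜 := ℝ) (n := Fin d) M (ev x) = ev (M *ᵥ x) := by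
  simp [ev, toEuclideanCLM_toLp, Matrix.toLin'_apply]

lemma mulVec_norm_le {M : Matrix (Fin d) (Fin d) ℝ} {c : ℝ}
    (h : ‖Matrix.toEuclideanCLM (𝕜 := ℝ) (n := Fin d) M‖ ≤ c) (x : Fin d → ℝ) :
    ‖ev (M *ᵥ x)‖ ≤ c * ‖ev x‖ := by
  rw [← clm_apply]
  exact ((Matrix.toEuclideanCLM (𝕜 := ℝ) (n := Fin d) M).le_opNorm (ev x)).trans
    (mul_le_mul_of_nonneg_right h (norm_nonneg _))

open scoped MatrixOrder in
lemma quad_abs_le_of_opNorm {B M : Matrix (Fin d) (Fin d) ℝ} (hB : B.PosDef)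
    (hM : M.IsHermitian) {c : ℝ}
    (h : ‖Matrix.toEuclideanCLM (𝕜 := ℝ) (n := Fin d) (B⁻¹ * M)‖ ≤ c)
    (x : Fin d → ℝ) : |x ⬝ᵥ M *ᵥ x| ≤ c * (x ⬝ᵥ B *ᵥ x) := by
  classical
  have hBdet : B.det ≠ 0 := ne_of_gt hB.det_pos
  have hBinv : (B⁻¹).PosDef := hB.inv
  set R := CFC.sqrt (B⁻¹) with hRdef
  have hRR : R * R = B⁻¹ := CFC.sqrt_mul_sqrt_self _ hBinv.posSemidef.nonneg
  have hRherm : R.IsHermitian := (Matrix.nonneg_iff_posSemidef.mp (CFC.sqrt_nonneg _)).1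
  have hRsym : Rᵀ = R := by rw [← Matrix.conjTranspose_eq_transpose_of_trivial]; exact hRherm
  have hdetRR : R.det * R.det = (B⁻¹).det := by rw [← det_mul, hRR]
  have hBidet : (B⁻¹).det ≠ 0 := by
    rw [det_nonsing_inv, Ring.inverse_eq_inv']; exact inv_ne_zero hBdet
  have hRdet : R.det ≠ 0 := fun h0 => hBidet (by rw [← hdetRR, h0, mul_zero])
  have hRinvR : R⁻¹ * R = 1 := nonsing_inv_mul R (isUnit_iff_ne_zero.mpr hRdet)
  have hRRinv : R * R⁻¹ = 1 := mul_nonsing_inv R (isUnit_iff_ne_zero.mpr hRdet)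
  have hBiB : B⁻¹ * B = 1 := nonsing_inv_mul B (isUnit_iff_ne_zero.mpr hBdet)
  have h1 : R * (R * B) = 1 := by rw [← mul_assoc, hRR, hBiB]
  have h2 : R * B = R⁻¹ := by
    calc R * B = R⁻¹ * (R * (R * B)) := by rw [← mul_assoc, hRinvR, one_mul]
      _ = R⁻¹ := by rw [h1, mul_one]
  have hRBR : R * B * R = 1 := by rw [mul_assoc, ← mul_assoc R B, h2, hRinvR]
  set K := R * M * R with hKdef
  have hKherm : K.IsHermitian := by
    show Kᴴ = K
    rw [hKdef]
    simp only [conjTranspose_mul, hRherm.eq, hM.eq, mul_assoc]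
  have shift : ∀ (y q : Fin d → ℝ), y ⬝ᵥ R *ᵥ q = (R *ᵥ y) ⬝ᵥ q := by
    intro y q
    rw [dotProduct_mulVec, ← mulVec_transpose, hRsym]
  have heig : ∀ (μ : ℝ) (v : Fin d → ℝ), v ≠ 0 → K *ᵥ v = μ • v → |μ| ≤ c := by
    intro μ v hv0 hKv
    set z := R *ᵥ v with hzdef
    have hz0 : z ≠ 0 := by
      intro h0
      apply hv0
      have : R⁻¹ *ᵥ z = v := by rw [hzdef, mulVec_mulVec, hRinvR, one_mulVec]
      rw [← this, h0, mulVec_zero]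
    have hcomm : B⁻¹ * M * R = R * K := by rw [hKdef, ← hRR]; noncomm_ring
    have heq : (B⁻¹ * M) *ᵥ z = μ • z := by
      rw [hzdef, mulVec_mulVec, hcomm, ← mulVec_mulVec, hKv, mulVec_smul]
    have hnz : ‖ev z‖ ≠ 0 := fun h0 => hz0 (ev_eq_zero (norm_eq_zero.mp h0))
    have : |μ| * ‖ev z‖ ≤ c * ‖ev z‖ := by
      calc |μ| * ‖ev z‖ = ‖ev ((B⁻¹ * M) *ᵥ z)‖ := by
            rw [heq, ev_smul, norm_smul]; simp [Real.norm_eq_abs]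
        _ ≤ c * ‖ev z‖ := mulVec_norm_le h z
    exact le_of_mul_le_mul_right this (lt_of_le_of_ne (norm_nonneg _) (Ne.symm hnz))
  have main := quad_abs_le_of_eig K hKherm c heig (R⁻¹ *ᵥ x)
  set y := R⁻¹ *ᵥ x with hydef
  have hxy : R *ᵥ y = x := by rw [hydef, mulVec_mulVec, hRRinv, one_mulVec]
  have split : K *ᵥ y = R *ᵥ (M *ᵥ (R *ᵥ y)) := by
    rw [hKdef, ← mulVec_mulVec, ← mulVec_mulVec]
  have eq1 : y ⬝ᵥ K *ᵥ y = x ⬝ᵥ M *ᵥ x := by rw [split, shift, hxy]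
  have eq2 : y ⬝ᵥ y = x ⬝ᵥ B *ᵥ x := by
    conv_rhs => rw [← hxy]
    rw [← shift y (B *ᵥ (R *ᵥ y)), mulVec_mulVec, mulVec_mulVec, hRBR, one_mulVec]
  rwa [eq1, eq2] at main

end StabAux

namespace StabAux
variable {d : ℕ}

lemma dot_self_nonneg (v : Fin d → ℝ) : 0 ≤ v ⬝ᵥ v :=
  Finset.sum_nonneg fun i _ => mul_self_nonneg _

lemma bilin_le {B D : Matrix (Fin d) (Fin d) ℝ} (hD : Dᵀ = D) {c t : ℝ} (ht : 0 < t)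
    
    (h : ∀ x, |x ⬝ᵥ D *ᵥ x| ≤ c * (x ⬝ᵥ B *ᵥ x)) (w u : Fin d → ℝ) :
    w ⬝ᵥ D *ᵥ u ≤ (c/2) * (t * (w ⬝ᵥ B *ᵥ w) + (u ⬝ᵥ B *ᵥ u)/t) := by
  set s := Real.sqrt t with hsdef
  have hs2 : s * s = t := Real.mul_self_sqrt ht.le
  have hs0 : s ≠ 0 := fun h0 => by simp [h0] at hs2; exact absurd hs2.symm (ne_of_gt ht)
  set a := s • w with hadef
  set b := s⁻¹ • u with hbdef
  have hsymm : ∀ p q : Fin d → ℝ, q ⬝ᵥ D *ᵥ p = p ⬝ᵥ D *ᵥ q := by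
    intro p q
    rw [dotProduct_mulVec, ← mulVec_transpose, hD, dotProduct_comm]
  have hab : a ⬝ᵥ D *ᵥ b = w ⬝ᵥ D *ᵥ u := by
    rw [hadef, hbdef, smul_dotProduct, mulVec_smul, dotProduct_smul]
    rw [smul_smul, mul_inv_cancel₀ hs0, one_smul]
  have hpol : (a+b) ⬝ᵥ D *ᵥ (a+b) - (a-b) ⬝ᵥ D *ᵥ (a-b) = 4 * (a ⬝ᵥ D *ᵥ b) := by
    rw [mulVec_add, mulVec_sub, dotProduct_add, dotProduct_sub, add_dotProduct,
      add_dotProduct, sub_dotProduct, sub_dotProduct, hsymm a b]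
    ring
  have hB2 : (a+b) ⬝ᵥ B *ᵥ (a+b) + (a-b) ⬝ᵥ B *ᵥ (a-b)
      = 2 * (a ⬝ᵥ B *ᵥ a) + 2 * (b ⬝ᵥ B *ᵥ b) := by
    rw [mulVec_add, mulVec_sub, dotProduct_add, dotProduct_sub, add_dotProduct,
      add_dotProduct, sub_dotProduct, sub_dotProduct]
    ring
  have ha : a ⬝ᵥ B *ᵥ a = t * (w ⬝ᵥ B *ᵥ w) := by
    rw [hadef, smul_dotProduct, mulVec_smul, dotProduct_smul]
    simp only [smul_eq_mul, ← mul_assoc, hs2]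
  have hb : b ⬝ᵥ B *ᵥ b = (u ⬝ᵥ B *ᵥ u)/t := by
    rw [hbdef, smul_dotProduct, mulVec_smul, dotProduct_smul]
    rw [smul_eq_mul, smul_eq_mul, ← mul_assoc, ← mul_inv, hs2]
    field_simp
  have h1 := h (a+b)
  have h2 := h (a-b)
  have l1 : (a+b) ⬝ᵥ D *ᵥ (a+b) ≤ c * ((a+b) ⬝ᵥ B *ᵥ (a+b)) :=
    (le_abs_self _).trans h1
  have l2 : -((a-b) ⬝ᵥ D *ᵥ (a-b)) ≤ c * ((a-b) ⬝ᵥ B *ᵥ (a-b)) :=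
    (neg_le_abs _).trans h2
  have hc3 : c * ((a+b) ⬝ᵥ B *ᵥ (a+b)) + c * ((a-b) ⬝ᵥ B *ᵥ (a-b))
      = c * (2 * (t * (w ⬝ᵥ B *ᵥ w)) + 2 * ((u ⬝ᵥ B *ᵥ u)/t)) := by
    rw [← mul_add, hB2, ha, hb]
  have h4 : 4 * (w ⬝ᵥ D *ᵥ u)
      ≤ c * (2 * (t * (w ⬝ᵥ B *ᵥ w)) + 2 * ((u ⬝ᵥ B *ᵥ u)/t)) := by
    linarith [l1, l2, hpol, hab, hc3]
  have hring : c * (2 * (t * (w ⬝ᵥ B *ᵥ w)) + 2 * ((u ⬝ᵥ B *ᵥ u)/t))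
      = 4 * ((c/2) * (t * (w ⬝ᵥ B *ᵥ w) + (u ⬝ᵥ B *ᵥ u)/t)) := by ring
  linarith [h4, hring]

end StabAux


namespace StabAux
variable {d : ℕ}

lemma transpose_of_herm {X : Matrix (Fin d) (Fin d) ℝ} (h : X.IsHermitian) : Xᵀ = X := by
  rw [← Matrix.conjTranspose_eq_transpose_of_trivial]; exact h

end StabAux


set_option maxHeartbeats 1000000 in
set_option synthInstance.maxHeartbeats 400000 in
open StabAux in
/-- Full-matrix (Lai–Wei) stability plus small ridge regularization implies
directional stability: there is an absolute constant `C > 0` such that,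
whenever `‖Σ̃⁻¹Σ̂ − I‖_op ≤ ε`, `λ‖Σ̃⁻¹‖_op ≤ ε`, `ε < 1/2`,
`0 < λ ≤ λ_min(Σ̃)`, the squared empirical L² distance between
`α̂(z) = ν⊤(Σ̂+λI)⁻¹φ(z)` and `α̃(z) = ν⊤Σ̃⁻¹φ(z)` equals
`ν⊤((Σ̂+λI)⁻¹ − Σ̃⁻¹)Σ̂((Σ̂+λI)⁻¹ − Σ̃⁻¹)ν` and is at most `C ε² ν⊤Σ̃⁻¹ν`. -/
theorem fullmatrix_stability_implies_directional :
    ∃ C : ℝ, 0 < C ∧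
      ∀ (d T : ℕ), 1 ≤ T →
      ∀ (φ : Fin T → Fin d → ℝ)
        (Shat Stil : Matrix (Fin d) (Fin d) ℝ)
        (ν : Fin d → ℝ) (lam ε : ℝ),
        Shat = (1 / (T : ℝ)) • ∑ t, vecMulVec (φ t) (φ t) →
        Stil.PosDef → ν ≠ 0 → 0 < lam → ε < 1/2 →
        (∀ x : EuclideanSpace ℝ (Fin d),
          lam * ‖x‖^2 ≤ (x : Fin d → ℝ) ⬝ᵥ Stil.mulVec (x : Fin d → ℝ)) →
        ‖Matrix.toEuclideanCLM (𝕜 := ℝ) (n := Fin d) (Stil⁻¹ * Shat - 1)‖ ≤ ε →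
        lam * ‖Matrix.toEuclideanCLM (𝕜 := ℝ) (n := Fin d) Stil⁻¹‖ ≤ ε →
        ((1 / (T : ℝ)) * ∑ t,
            (ν ⬝ᵥ ((Shat + lam • (1 : Matrix (Fin d) (Fin d) ℝ))⁻¹ - Stil⁻¹).mulVec (φ t))^2
          = ν ⬝ᵥ (((Shat + lam • (1 : Matrix (Fin d) (Fin d) ℝ))⁻¹ - Stil⁻¹) * Shat *
              ((Shat + lam • (1 : Matrix (Fin d) (Fin d) ℝ))⁻¹ - Stil⁻¹)).mulVec ν) ∧
        ((1 / (T : ℝ)) * ∑ t,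
            (ν ⬝ᵥ ((Shat + lam • (1 : Matrix (Fin d) (Fin d) ℝ))⁻¹ - Stil⁻¹).mulVec (φ t))^2
          ≤ C * ε^2 * (ν ⬝ᵥ Stil⁻¹.mulVec ν)) := by
  classical
  refine ⟨24, by norm_num, ?_⟩
  intro d T hT φ Shat B ν lam ε hS hB hν hlam hε2 hBlow hyp6 hyp7
  have hBdet : IsUnit B.det := isUnit_iff_ne_zero.mpr (ne_of_gt hB.det_pos)
  have hBiB : B⁻¹ * B = 1 := nonsing_inv_mul B hBdet
  have hBBi : B * B⁻¹ = 1 := mul_nonsing_inv B hBdet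
  -- Shat facts
  have hSsym : Shatᵀ = Shat := by
    rw [hS, transpose_smul, transpose_sum]
    congr 1
    refine Finset.sum_congr rfl fun t _ => ?_
    ext i j
    simp [vecMulVec, transpose_apply, mul_comm]
  have hSherm : Shat.IsHermitian := by
    rw [Matrix.IsHermitian, Matrix.conjTranspose_eq_transpose_of_trivial, hSsym]
  have hquadS : ∀ v : Fin d → ℝ,
      v ⬝ᵥ Shat *ᵥ v = (1 / (T : ℝ)) * ∑ t, (φ t ⬝ᵥ v)^2 := by
    intro v
    have hsum : (∑ t, vecMulVec (φ t) (φ t)) *ᵥ v = ∑ t, ((φ t ⬝ᵥ v) • φ t) := by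
      ext i
      simp only [mulVec, dotProduct, Matrix.sum_apply, Finset.sum_apply, vecMulVec_apply,
        Pi.smul_apply, smul_eq_mul, Finset.sum_mul]
      rw [Finset.sum_comm]
      exact Finset.sum_congr rfl fun t _ => Finset.sum_congr rfl fun j _ => by ring
    have dot_sum : ∀ g : Fin T → Fin d → ℝ, v ⬝ᵥ (∑ t, g t) = ∑ t, v ⬝ᵥ g t := by
      intro g
      simp only [dotProduct, Finset.sum_apply, Finset.mul_sum]
      exact Finset.sum_comm
    rw [hS, smul_mulVec, dotProduct_smul, hsum, dot_sum, smul_eq_mul]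
    congr 1
    refine Finset.sum_congr rfl fun t _ => ?_
    rw [dotProduct_smul, smul_eq_mul, dotProduct_comm v (φ t)]; ring
  have hstar : ∀ v : Fin d → ℝ, star v = v := fun v => funext fun i => star_trivial _
  have hShat_psd : Shat.PosSemidef := by
    refine .of_dotProduct_mulVec_nonneg hSherm fun x => ?_
    rw [hstar, hquadS]
    have : (0:ℝ) ≤ ∑ t, (φ t ⬝ᵥ x)^2 := Finset.sum_nonneg fun t _ => sq_nonneg _
    positivity
  have hlam1 : (lam • (1 : Matrix (Fin d) (Fin d) ℝ)).PosDef := by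
    rw [smul_one_eq_diagonal]
    exact posDef_diagonal_iff.mpr fun i => hlam
  set A := Shat + lam • (1 : Matrix (Fin d) (Fin d) ℝ) with hADef
  have hA : A.PosDef := Matrix.PosDef.posSemidef_add hShat_psd hlam1
  have hAdet : IsUnit A.det := isUnit_iff_ne_zero.mpr hA.det_pos.ne'
  have hAAi : A * A⁻¹ = 1 := mul_nonsing_inv _ hAdet
  have hAinv : A⁻¹.PosDef := hA.inv
  have hBinvpd : (B⁻¹).PosDef := hB.inv
  have hMsym : (A⁻¹ - B⁻¹)ᵀ = A⁻¹ - B⁻¹ := by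
    rw [transpose_sub, transpose_of_herm hAinv.1, transpose_of_herm hBinvpd.1]
  set M := A⁻¹ - B⁻¹ with hMdef
  set w := M *ᵥ ν with hwdef
  set u := B⁻¹ *ᵥ ν with hudef
  have hMshift : ∀ q : Fin d → ℝ, ν ⬝ᵥ M *ᵥ q = w ⬝ᵥ q := fun q => by
    rw [dotProduct_mulVec, ← mulVec_transpose, hMsym, ← hwdef]
  -- Part 1
  have hr : ν ⬝ᵥ (M * Shat * M) *ᵥ ν = w ⬝ᵥ Shat *ᵥ w := by
    have hsplit : (M * Shat * M) *ᵥ ν = M *ᵥ (Shat *ᵥ (M *ᵥ ν)) := by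
      rw [← mulVec_mulVec, ← mulVec_mulVec]
    rw [hsplit, ← hwdef, hMshift]
  have part1 : (1 / (T : ℝ)) * ∑ t, (ν ⬝ᵥ M *ᵥ (φ t))^2 = ν ⬝ᵥ (M * Shat * M) *ᵥ ν := by
    rw [hr, hquadS w]
    congr 1
    exact Finset.sum_congr rfl fun t _ => by rw [hMshift, dotProduct_comm]
  -- quadratic form bounds
  have hermSB : (Shat - B).IsHermitian := hSherm.sub hB.1
  have hyp6' : ‖Matrix.toEuclideanCLM (𝕜 := ℝ) (n := Fin d) (B⁻¹ * (Shat - B))‖ ≤ ε := by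
    rw [mul_sub, hBiB]; exact hyp6
  have h_SB := quad_abs_le_of_opNorm hB hermSB hyp6'
  have hsmulclm : Matrix.toEuclideanCLM (𝕜 := ℝ) (n := Fin d) (lam • B⁻¹)
      = lam • Matrix.toEuclideanCLM (𝕜 := ℝ) (n := Fin d) B⁻¹ := by
    refine ContinuousLinearMap.ext fun x => ?_
    have h1 : Matrix.toEuclideanCLM (𝕜 := ℝ) (n := Fin d) (lam • B⁻¹) x
        = ev ((lam • B⁻¹) *ᵥ (WithLp.equiv 2 _ x)) := clm_apply _ _
    have h2 : Matrix.toEuclideanCLM (𝕜 := ℝ) (n := Fin d) B⁻¹ x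
        = ev (B⁻¹ *ᵥ (WithLp.equiv 2 _ x)) := clm_apply _ _
    rw [ContinuousLinearMap.smul_apply, h1, h2, smul_mulVec, ev_smul]
  have hyp7' : ‖Matrix.toEuclideanCLM (𝕜 := ℝ) (n := Fin d)
      (B⁻¹ * (lam • (1 : Matrix (Fin d) (Fin d) ℝ)))‖ ≤ ε := by
    have e : B⁻¹ * (lam • (1 : Matrix (Fin d) (Fin d) ℝ)) = lam • B⁻¹ := by
      rw [Matrix.mul_smul, mul_one]
    rw [e, hsmulclm]
    calc ‖lam • Matrix.toEuclideanCLM (𝕜 := ℝ) (n := Fin d) B⁻¹‖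
        ≤ ‖lam‖ * ‖Matrix.toEuclideanCLM (𝕜 := ℝ) (n := Fin d) B⁻¹‖ := ContinuousLinearMap.opNorm_smul_le _ _
      _ = lam * ‖Matrix.toEuclideanCLM (𝕜 := ℝ) (n := Fin d) B⁻¹‖ := by
          rw [Real.norm_eq_abs, abs_of_pos hlam]
      _ ≤ ε := hyp7
  have h_lam1 := quad_abs_le_of_opNorm hB hlam1.1 hyp7'
  have h_lam : ∀ v : Fin d → ℝ, lam * (v ⬝ᵥ v) ≤ ε * (v ⬝ᵥ B *ᵥ v) := fun v => by
    have h := h_lam1 v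
    rwa [smul_mulVec, one_mulVec, dotProduct_smul, smul_eq_mul,
      abs_of_nonneg (mul_nonneg hlam.le (dot_self_nonneg v))] at h
  have hqB : ∀ v : Fin d → ℝ, 0 ≤ v ⬝ᵥ B *ᵥ v := fun v => by
    have h := hB.posSemidef.dotProduct_mulVec_nonneg v
    rwa [hstar] at h
  -- ε > 0
  obtain ⟨i0, hi0⟩ : ∃ i, ν i ≠ 0 := by
    by_contra hcon; push_neg at hcon; exact hν (funext hcon)
  have hBine : (B⁻¹ : Matrix (Fin d) (Fin d) ℝ) ≠ 0 := by
    intro h0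
    have h1 := hBiB
    rw [h0, zero_mul] at h1
    have h2 : (0 : Matrix (Fin d) (Fin d) ℝ) i0 i0 = (1 : Matrix (Fin d) (Fin d) ℝ) i0 i0 := by
      rw [h1]
    simp [Matrix.one_apply_eq] at h2
  have hclm_ne : Matrix.toEuclideanCLM (𝕜 := ℝ) (n := Fin d) B⁻¹ ≠ 0 := by
    intro h0
    apply hBine
    have h1 := congrArg (Matrix.toEuclideanCLM (𝕜 := ℝ) (n := Fin d)).symm h0
    simpa using h1
  have hεpos : 0 < ε := lt_of_lt_of_le (mul_pos hlam (norm_pos_iff.mpr hclm_ne)) hyp7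
  -- the fixed point bound
  have hAsym : Aᵀ = A := by
    rw [hADef, transpose_add, hSsym, transpose_smul, transpose_one]
  have hDsym : (B - A)ᵀ = B - A := by
    rw [transpose_sub, transpose_of_herm hB.1, hAsym]
  have hD_bound : ∀ v : Fin d → ℝ, |v ⬝ᵥ (B - A) *ᵥ v| ≤ (2*ε) * (v ⬝ᵥ B *ᵥ v) := fun v => by
    have e : v ⬝ᵥ (B - A) *ᵥ v
        = -(v ⬝ᵥ (Shat - B) *ᵥ v) - (v ⬝ᵥ (lam • (1 : Matrix (Fin d) (Fin d) ℝ)) *ᵥ v) := by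
      rw [hADef]
      simp only [sub_mulVec, add_mulVec, dotProduct_sub, dotProduct_add]
      ring
    rw [e]
    have habs : |-(v ⬝ᵥ (Shat - B) *ᵥ v) - (v ⬝ᵥ (lam • (1 : Matrix (Fin d) (Fin d) ℝ)) *ᵥ v)|
        ≤ |v ⬝ᵥ (Shat - B) *ᵥ v| + |v ⬝ᵥ (lam • (1 : Matrix (Fin d) (Fin d) ℝ)) *ᵥ v| := by
      calc _ ≤ |-(v ⬝ᵥ (Shat - B) *ᵥ v)| + |v ⬝ᵥ (lam • (1 : Matrix (Fin d) (Fin d) ℝ)) *ᵥ v| :=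
            abs_sub _ _
        _ = _ := by rw [abs_neg]
    have := h_SB v
    have := h_lam1 v
    linarith
  have e1 : A *ᵥ w = (B - A) *ᵥ u := by
    have hmat : A * M = (B - A) * B⁻¹ := by
      rw [hMdef, mul_sub, sub_mul, hAAi, hBBi]
    rw [hwdef, hudef, mulVec_mulVec, mulVec_mulVec, hmat]
  have hpol := bilin_le hDsym (c := 2*ε) (t := 1/(4*ε)) (by positivity) hD_bound w u
  have hX1 : w ⬝ᵥ A *ᵥ w ≤ (w ⬝ᵥ B *ᵥ w)/4 + 4*ε^2*(u ⬝ᵥ B *ᵥ u) := by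
    have heq : (2*ε/2) * ((1/(4*ε)) * (w ⬝ᵥ B *ᵥ w) + (u ⬝ᵥ B *ᵥ u)/(1/(4*ε)))
        = (w ⬝ᵥ B *ᵥ w)/4 + 4*ε^2*(u ⬝ᵥ B *ᵥ u) := by
      field_simp
    rw [e1]
    linarith [hpol, heq.symm.le, heq.le]
  have hexpand : w ⬝ᵥ A *ᵥ w = w ⬝ᵥ B *ᵥ w + w ⬝ᵥ (Shat - B) *ᵥ w + lam * (w ⬝ᵥ w) := by
    rw [hADef]
    simp only [add_mulVec, sub_mulVec, dotProduct_add, dotProduct_sub, smul_mulVec,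
      one_mulVec, dotProduct_smul, smul_eq_mul]
    ring
  have e3 : (1 - ε) * (w ⬝ᵥ B *ᵥ w) ≤ w ⬝ᵥ A *ᵥ w := by
    have h1 := (neg_abs_le _).trans (le_refl (w ⬝ᵥ (Shat - B) *ᵥ w))
    have h2 := h_SB w
    have h3 : 0 ≤ lam * (w ⬝ᵥ w) := mul_nonneg hlam.le (dot_self_nonneg w)
    rw [hexpand]
    nlinarith [abs_nonneg (w ⬝ᵥ (Shat - B) *ᵥ w), neg_abs_le (w ⬝ᵥ (Shat - B) *ᵥ w)]
  have hqBw : w ⬝ᵥ B *ᵥ w ≤ 2 * (w ⬝ᵥ A *ᵥ w) := by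
    nlinarith [e3, hqB w]
  have hXfix : w ⬝ᵥ A *ᵥ w ≤ 8*ε^2*(u ⬝ᵥ B *ᵥ u) := by linarith
  have hSup : w ⬝ᵥ Shat *ᵥ w ≤ (1+ε) * (w ⬝ᵥ B *ᵥ w) := by
    have h1 := (le_abs_self (w ⬝ᵥ (Shat - B) *ᵥ w)).trans (h_SB w)
    have h2 : w ⬝ᵥ Shat *ᵥ w = w ⬝ᵥ B *ᵥ w + w ⬝ᵥ (Shat - B) *ᵥ w := by
      simp only [sub_mulVec, dotProduct_sub]
      ring
    linarith
  have hSfin : w ⬝ᵥ Shat *ᵥ w ≤ 24*ε^2*(u ⬝ᵥ B *ᵥ u) := by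
    have h2 : (1+ε) * (w ⬝ᵥ B *ᵥ w) ≤ (3/2) * (w ⬝ᵥ B *ᵥ w) := by
      nlinarith [hqB w]
    linarith
  have hYeq : u ⬝ᵥ B *ᵥ u = ν ⬝ᵥ B⁻¹ *ᵥ ν := by
    have hBu : B *ᵥ u = ν := by rw [hudef, mulVec_mulVec, hBBi, one_mulVec]
    rw [hBu, ← hudef, dotProduct_comm]
  refine ⟨part1, ?_⟩
  calc (1 / (T : ℝ)) * ∑ t, (ν ⬝ᵥ M *ᵥ (φ t))^2
      = w ⬝ᵥ Shat *ᵥ w := part1.trans hr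
    _ ≤ 24*ε^2*(u ⬝ᵥ B *ᵥ u) := hSfin
    _ = 24 * ε^2 * (ν ⬝ᵥ B⁻¹ *ᵥ ν) := by rw [hYeq]
end
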